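/- Let G = (U, V, E) be a bipartite graph, k and θ natural numbers with θ ≥ k, and (u, v) ∈ E with u ∈ U, v ∈ V. If the number of vertices w ∈ N(v) such that |N(u) ∩ N(w)| ≥ θ − k is strictly less than θ − k, then there is no k-defective biclique D = (U_D, V_D, E_D) of G with |U_D| ≥ θ, |V_D| ≥ θ, u ∈ U_D and v ∈ V_D. (Here N(v) ⊆ U is the neighborhood of v and N(u), N(w) ⊆ V are the neighborhoods of u and w in G.) -/

import Mathlib

/-- common-neighbor-based pruning rule. If the edge `(u, v)` has fewer than
`θ − k` vertices `w ∈ N(v)` with `|N(u) ∩ N(w)| ≥ θ − k`, then no `k`-defective biclique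
with both sides of size at least `θ` contains both `u` and `v`. -/
theorem common_neighbor_reduction {α β : Type*} [DecidableEq α] [DecidableEq β]
    (U : Finset α) (V : Finset β) (E : Finset (α × β)) (hE : E ⊆ U ×ˢ V)
    (k θ : ℕ) (hθ : k ≤ θ)
    (u : α) (v : β) (huv : (u, v) ∈ E)
    (h : ((U.filter (fun w => (w, v) ∈ E)).filter
        (fun w => θ - k ≤ (V.filter (fun x => (u, x) ∈ E ∧ (w, x) ∈ E)).card)).card
        < θ - k) :
    ¬ ∃ (UD : Finset α) (VD : Finset β), UD ⊆ U ∧ VD ⊆ V ∧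
        ((UD ×ˢ VD) \ E).card ≤ k ∧ θ ≤ UD.card ∧ θ ≤ VD.card ∧ u ∈ UD ∧ v ∈ VD := by
  rintro ⟨UD, VD, hUD, hVD, hdef, hUcard, hVcard, huD, hvD⟩
  -- for every w ∈ UD, the common neighborhood of u and w in V has at least θ - k elements
  have key : ∀ w ∈ UD, θ - k ≤ (V.filter (fun x => (u, x) ∈ E ∧ (w, x) ∈ E)).card := by
    intro w hw
    have hbad : (VD.filter (fun x => ¬((u, x) ∈ E ∧ (w, x) ∈ E))).card ≤ k := by
      refine le_trans ?_ hdef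
      apply Finset.card_le_card_of_injOn (fun x => (if (u, x) ∈ E then w else u, x))
      · intro x hx
        simp only [Finset.mem_coe, Finset.mem_filter] at hx
        obtain ⟨hxVD, hnot⟩ := hx
        by_cases hux : (u, x) ∈ E
        · beta_reduce; rw [if_pos hux]; simp only [Finset.mem_coe, Finset.mem_sdiff, Finset.mem_product]
          exact ⟨⟨hw, hxVD⟩, fun hc => hnot ⟨hux, hc⟩⟩
        · beta_reduce; rw [if_neg hux]; simp only [Finset.mem_coe, Finset.mem_sdiff, Finset.mem_product]
          exact ⟨⟨huD, hxVD⟩, hux⟩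
      · intro a _ b _ hab
        exact congrArg Prod.snd hab
    have hgood : θ - k ≤ (VD.filter (fun x => (u, x) ∈ E ∧ (w, x) ∈ E)).card := by
      have := Finset.card_filter_add_card_filter_not
        (s := VD) (p := fun x => (u, x) ∈ E ∧ (w, x) ∈ E)
      omega
    refine le_trans hgood (Finset.card_le_card ?_)
    intro x hx
    simp only [Finset.mem_filter] at hx ⊢
    exact ⟨hVD hx.1, hx.2⟩
  -- at least θ - k vertices of UD are adjacent to v
  have hbad2 : (UD.filter (fun w => ¬ (w, v) ∈ E)).card ≤ k := by
    refine le_trans ?_ hdef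
    apply Finset.card_le_card_of_injOn (fun w => (w, v))
    · intro w hw
      simp only [Finset.mem_coe, Finset.mem_filter] at hw
      simp only [Finset.mem_coe, Finset.mem_sdiff, Finset.mem_product]
      exact ⟨⟨hw.1, hvD⟩, hw.2⟩
    · intro a _ b _ hab
      exact congrArg Prod.fst hab
  have hgood2 : θ - k ≤ (UD.filter (fun w => (w, v) ∈ E)).card := by
    have := Finset.card_filter_add_card_filter_not
      (s := UD) (p := fun w => (w, v) ∈ E)
    omega
  have hsub : UD.filter (fun w => (w, v) ∈ E) ⊆
      (U.filter (fun w => (w, v) ∈ E)).filter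
        (fun w => θ - k ≤ (V.filter (fun x => (u, x) ∈ E ∧ (w, x) ∈ E)).card) := by
    intro w hw
    simp only [Finset.mem_filter] at hw ⊢
    exact ⟨⟨hUD hw.1, hw.2⟩, key w hw.1⟩
  have := Finset.card_le_card hsub
  omega
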